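/- Assume (J) and (F2'), and suppose c_β ∈ ℝ for every 0 < β ≤ +∞. Then c_β → c_∞ as β → +∞. -/
import Mathlib


open Filter Topology

/-- Kuratowski limit superior of a sequence of subsets of a metric space. -/
def SeqLimsup {X : Type*} [MetricSpace X] (A : ℕ → Set X) : Set X :=
  {x | ∃ φ : ℕ → ℕ, StrictMono φ ∧
    ∃ y : ℕ → X, (∀ n, y n ∈ A (φ n)) ∧ Tendsto y atTop (𝓝 x)}

/-- Assume (J) and (F2'), and suppose the minimax levels `c_β` are real for every
`0 < β ≤ +∞`. Then `c_β → c_∞` as `β → +∞`. -/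
theorem minimax_levels_converge {X : Type*} [MetricSpace X]
    (F : Set (Set X)) (J : ℝ → X → EReal)
    -- each J_β, β > 0, is lower semicontinuous
    (hlsc : ∀ β : ℝ, 0 < β → LowerSemicontinuous (J β))
    -- assumption (J): monotonicity in β on (0, +∞)
    (hmono : ∀ β₁ β₂ : ℝ, 0 < β₁ → β₁ ≤ β₂ → ∀ x, J β₁ x ≤ J β₂ x)
    -- the limit functional J_∞
    (Jinf : X → EReal) (hJinf : ∀ x, Jinf x = ⨆ β : ℝ, ⨆ _ : 0 < β, J β x)
    -- the minimax levels c_β, 0 < β < +∞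
    (cβ : ℝ → EReal) (hcβ : ∀ β : ℝ, cβ β = ⨅ A ∈ F, ⨆ x ∈ A, J β x)
    -- the minimax level c_∞ is real
    (cinf : ℝ) (hcinf : (⨅ A ∈ F, ⨆ x ∈ A, Jinf x) = (cinf : EReal))
    -- the minimax levels c_β are real
    (hcreal : ∀ β : ℝ, 0 < β → ∃ r : ℝ, cβ β = (r : EReal))
    -- assumption (F2')
    (hF2' : ∀ A : ℕ → Set X, (∀ n, A n ∈ F) →
      (∃ β : ℝ, 0 < β ∧ ∀ n, ∀ x ∈ A n, J β x ≤ (cinf : EReal) + 1) →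
      SeqLimsup A ∈ F) :
    Tendsto cβ atTop (𝓝 (cinf : EReal)) := by
  have hcmono : ∀ β₁ β₂ : ℝ, 0 < β₁ → β₁ ≤ β₂ → cβ β₁ ≤ cβ β₂ := by
    intro β₁ β₂ h1 h12
    rw [hcβ, hcβ]
    exact iInf_mono fun A => iInf_mono fun hA => iSup_mono fun x => iSup_mono fun hx =>
      hmono β₁ β₂ h1 h12 x
  have hcle : ∀ β : ℝ, 0 < β → cβ β ≤ (cinf : EReal) := by
    intro β hβ
    rw [hcβ, ← hcinf]
    refine iInf_mono fun A => iInf_mono fun hA => iSup_mono fun x => iSup_mono fun hx => ?_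
    rw [hJinf]
    exact le_iSup₂ (f := fun β (_ : (0:ℝ) < β) => J β x) β hβ
  choose r hr using fun n : ℕ => hcreal ((n:ℝ)+1) (by positivity)
  have hrle : ∀ n : ℕ, r n ≤ cinf := by
    intro n
    have := hcle ((n:ℝ)+1) (by positivity)
    rw [hr n] at this
    exact_mod_cast this
  have hA : ∀ n : ℕ, ∃ A, A ∈ F ∧ ∀ x ∈ A,
      J ((n:ℝ)+1) x ≤ ((r n + ((n:ℝ)+1)⁻¹ : ℝ) : EReal) := by
    intro n
    have h1 : cβ ((n:ℝ)+1) < ((r n + ((n:ℝ)+1)⁻¹ : ℝ) : EReal) := by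
      rw [hr n]
      exact_mod_cast lt_add_of_pos_right (r n) (by positivity : (0:ℝ) < ((n:ℝ)+1)⁻¹)
    rw [hcβ] at h1
    obtain ⟨A, hA1⟩ := iInf_lt_iff.mp h1
    obtain ⟨hAF, hA2⟩ := iInf_lt_iff.mp hA1
    exact ⟨A, hAF, fun x hx => (le_iSup₂ (f := fun x (_ : x ∈ A) => J ((n:ℝ)+1) x) x hx).trans hA2.le⟩
  choose A hAF hAb using hA
  have hB : SeqLimsup A ∈ F := by
    refine hF2' A hAF ⟨1, one_pos, fun n x hx => ?_⟩
    calc J 1 x ≤ J ((n:ℝ)+1) x := hmono 1 _ one_pos (by linarith [Nat.cast_nonneg (α := ℝ) n]) x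
      _ ≤ ((r n + ((n:ℝ)+1)⁻¹ : ℝ) : EReal) := hAb n x hx
      _ ≤ (cinf : EReal) + 1 := by
          have h2 : r n + ((n:ℝ)+1)⁻¹ ≤ cinf + 1 := by
            have h3 : ((n:ℝ)+1)⁻¹ ≤ 1 := by
              rw [inv_le_one_iff₀]; right; linarith [Nat.cast_nonneg (α := ℝ) n]
            linarith [hrle n]
          calc ((r n + ((n:ℝ)+1)⁻¹ : ℝ) : EReal) ≤ ((cinf + 1 : ℝ) : EReal) := by exact_mod_cast h2
            _ = (cinf : EReal) + 1 := by push_cast; ring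
  set S : EReal := ⨆ n : ℕ, cβ ((n:ℝ)+1) with hS
  have hkey : (cinf : EReal) ≤ S := by
    have h1 : (cinf : EReal) ≤ ⨆ x ∈ SeqLimsup A, Jinf x := by
      rw [← hcinf]
      exact iInf₂_le (SeqLimsup A) hB
    refine h1.trans (iSup₂_le fun x hx => ?_)
    obtain ⟨φ, hφ, y, hy, hyx⟩ := hx
    rw [hJinf]
    refine iSup₂_le fun β hβ => ?_
    have hε : ∀ ε : ℝ, 0 < ε → J β x ≤ S + (ε : EReal) := by
      intro ε hε
      by_contra hlt
      push_neg at hlt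
      have hev : ∀ᶠ n in atTop, S + (ε : EReal) < J β (y n) :=
        hyx.eventually (hlsc β hβ x (S + (ε : EReal)) hlt)
      obtain ⟨n, hn1, hn2, hn3⟩ :=
        ((eventually_ge_atTop ⌈β⌉₊).and ((eventually_ge_atTop ⌈ε⁻¹⌉₊).and hev)).exists
      -- n ≥ ⌈β⌉₊ so β ≤ n+1 ≤ φ n + 1 ; (φ n + 1)⁻¹ ≤ (n+1)⁻¹ ≤ ε
      have hβn : β ≤ (φ n : ℝ) + 1 := by
        have h1 : β ≤ (⌈β⌉₊ : ℝ) := Nat.le_ceil β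
        have h2 : (⌈β⌉₊ : ℝ) ≤ (n : ℝ) := Nat.cast_le.mpr hn1
        have h3 : (n : ℝ) ≤ (φ n : ℝ) := Nat.cast_le.mpr (hφ.le_apply)
        linarith
      have hinv : ((φ n : ℝ) + 1)⁻¹ ≤ ε := by
        have h2 : ε⁻¹ ≤ (n : ℝ) := (Nat.le_ceil _).trans (Nat.cast_le.mpr hn2)
        have h3 : (n : ℝ) ≤ (φ n : ℝ) := Nat.cast_le.mpr (hφ.le_apply)
        have h4 : ε⁻¹ ≤ (φ n : ℝ) + 1 := by linarith
        have h5 : (0:ℝ) < ε⁻¹ := inv_pos.mpr hε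
        calc ((φ n : ℝ) + 1)⁻¹ ≤ (ε⁻¹)⁻¹ := by
              apply inv_anti₀ h5 h4
          _ = ε := inv_inv ε
      have hchain : J β (y n) ≤ S + (ε : EReal) := by
        calc J β (y n) ≤ J ((φ n : ℝ) + 1) (y n) := hmono β _ hβ hβn (y n)
          _ ≤ ((r (φ n) + ((φ n : ℝ)+1)⁻¹ : ℝ) : EReal) := hAb (φ n) (y n) (hy n)
          _ = ((r (φ n) : ℝ) : EReal) + ((((φ n : ℝ)+1)⁻¹ : ℝ) : EReal) := by
              exact_mod_cast EReal.coe_add _ _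
          _ ≤ S + (ε : EReal) := by
              apply add_le_add
              · rw [← hr (φ n)]
                exact le_iSup (fun m : ℕ => cβ ((m:ℝ)+1)) (φ n)
              · exact_mod_cast hinv
      exact absurd hn3 (not_lt.mpr hchain)
    -- from hε conclude J β x ≤ S
    rcases eq_top_or_lt_top S with hT | hT
    · rw [hT]; exact le_top
    rcases eq_bot_or_bot_lt S with hBo | hBo
    · have := hε 1 one_pos
      rw [hBo, EReal.bot_add] at this
      rw [hBo]; exact this
    lift S to ℝ using ⟨hT.ne, hBo.ne'⟩ with s hs
    by_contra hcon
    push_neg at hcon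
    obtain ⟨c, hc1, hc2⟩ := EReal.lt_iff_exists_real_btwn.mp hcon
    have hcs : (0:ℝ) < c - s := by
      have := EReal.coe_lt_coe_iff.mp hc1; linarith
    have := hε (c - s) hcs
    rw [← EReal.coe_add] at this
    have h6 : s + (c - s) = c := by ring
    rw [h6] at this
    exact absurd hc2 (not_lt.mpr this)
  rw [tendsto_order]
  constructor
  · intro a ha
    have h1 : a < S := ha.trans_le hkey
    obtain ⟨n, hn⟩ := lt_iSup_iff.mp h1
    filter_upwards [eventually_ge_atTop ((n:ℝ)+1)] with β hβ
    exact hn.trans_le (hcmono _ _ (by positivity) hβ)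
  · intro a ha
    filter_upwards [eventually_ge_atTop (1:ℝ)] with β hβ
    exact (hcle β (by linarith)).trans_lt ha
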